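/- Let n, m ≥ 1 and let A_1, …, A_m ∈ ℝ^{n×n} be Hurwitz matrices (every eigenvalue of each A_q has negative real part). Suppose there exists an invertible matrix T ∈ ℂ^{n×n} such that T⁻¹ A_q T is upper triangular for every q ∈ {1,…,m}. Then there exists a Hermitian positive definite matrix P ∈ ℂ^{n×n} such that A_qᴴ P + P A_q is negative definite for every q ∈ {1,…,m} (a common quadratic Lyapunov function for the family). -/

import Mathlib

open Matrix
open scoped ComplexOrder

noncomputable section

open Finset

/-- Congruence by an invertible matrix preserves positive definiteness. -/
lemma posDef_congr {n : ℕ} {M : Matrix (Fin n) (Fin n) ℂ} (hM : M.PosDef)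
    {B : Matrix (Fin n) (Fin n) ℂ} (hB : IsUnit B) : (Bᴴ * M * B).PosDef := by
  refine Matrix.PosDef.of_dotProduct_mulVec_pos (Matrix.isHermitian_conjTranspose_mul_mul B hM.1) (fun x hx => ?_)
  have hinj := Matrix.mulVec_injective_iff_isUnit.mpr hB
  have hBx : B *ᵥ x ≠ 0 := by
    intro h
    apply hx
    have : B *ᵥ x = B *ᵥ 0 := by simpa [Matrix.mulVec_zero] using h
    exact hinj this
  simpa only [star_mulVec, Matrix.dotProduct_mulVec, vecMul_vecMul] using hM.dotProduct_mulVec_pos hBx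

lemma amgm_weighted {K a b : ℝ} (hK : 0 < K) :
    a * b ≤ a ^ 2 / (2 * K) + K * b ^ 2 / 2 := by
  have h1 : 2 * K * (a * b) ≤ a ^ 2 + K ^ 2 * b ^ 2 := by nlinarith [sq_nonneg (a - K * b)]
  have h2 : a * b ≤ (a ^ 2 + K ^ 2 * b ^ 2) / (2 * K) := by
    rw [le_div_iff₀ (by positivity)]
    linarith
  refine h2.trans (le_of_eq ?_)
  field_simp

set_option maxHeartbeats 1000000 in
/-- Core lemma: a finite family of simultaneously upper triangular matrices whose
diagonal entries all have negative real part admits a common diagonal Lyapunov matrix. -/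
lemma common_lyapunov_triangular {n m : ℕ} (hn : 0 < n) (hm : 0 < m)
    (U : Fin m → Matrix (Fin n) (Fin n) ℂ)
    (htri : ∀ q, ∀ i j : Fin n, j < i → U q i j = 0)
    (hdiag : ∀ q i, (U q i i).re < 0) :
    ∃ d : Fin n → ℝ, (∀ i, 0 < d i) ∧ ∀ q,
      (-((U q)ᴴ * Matrix.diagonal (fun i => ((d i : ℝ) : ℂ)) +
         Matrix.diagonal (fun i => ((d i : ℝ) : ℂ)) * U q)).PosDef := by
  classical
  haveI : NeZero n := ⟨hn.ne'⟩
  haveI : NeZero m := ⟨hm.ne'⟩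
  have hne1 : (Finset.univ : Finset (Fin m × Fin n)).Nonempty := univ_nonempty
  have hne2 : (Finset.univ : Finset (Fin m × Fin n × Fin n)).Nonempty := univ_nonempty
  set c : ℝ := Finset.univ.inf' hne1 (fun p : Fin m × Fin n => -(U p.1 p.2 p.2).re) with hc_def
  have hc : 0 < c := by
    rw [hc_def, Finset.lt_inf'_iff]
    rintro ⟨q, i⟩ _
    simpa using hdiag q i
  have hcle : ∀ q i, c ≤ -(U q i i).re := fun q i => Finset.inf'_le _ (Finset.mem_univ (q, i))
  set C : ℝ := 1 + Finset.univ.sup' hne2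
      (fun p : Fin m × Fin n × Fin n => ‖U p.1 p.2.1 p.2.2‖) with hC_def
  have hCb : ∀ q i j, ‖U q i j‖ ≤ C := by
    intro q i j
    have := Finset.le_sup' (fun p : Fin m × Fin n × Fin n => ‖U p.1 p.2.1 p.2.2‖)
      (Finset.mem_univ (q, i, j))
    rw [hC_def]; linarith
  have hC0 : 0 < C := lt_of_lt_of_le one_pos (by
    have := (norm_nonneg (U ⟨0, hm⟩ ⟨0, hn⟩ ⟨0, hn⟩)).trans (hCb ⟨0, hm⟩ ⟨0, hn⟩ ⟨0, hn⟩)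
    -- this : 0 ≤ C, but we need 1 ≤ C
    have h2 := Finset.le_sup' (fun p : Fin m × Fin n × Fin n => ‖U p.1 p.2.1 p.2.2‖)
      (Finset.mem_univ ((⟨0, hm⟩ : Fin m), (⟨0, hn⟩ : Fin n), (⟨0, hn⟩ : Fin n)))
    have h3 := norm_nonneg (U ⟨0, hm⟩ ⟨0, hn⟩ ⟨0, hn⟩)
    rw [hC_def]; linarith)
  have hn' : (0 : ℝ) < n := by exact_mod_cast hn
  set K : ℝ := 2 * n * C / c with hK_def
  have hK : 0 < K := by rw [hK_def]; positivity
  set ε : ℝ := max 1 (2 * n * C * K / c) with hε_def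
  have hε1 : (1 : ℝ) ≤ ε := le_max_left _ _
  have hε0 : (0 : ℝ) < ε := lt_of_lt_of_le one_pos hε1
  have hεb : 2 * n * C * K / c ≤ ε := le_max_right _ _
  -- the two constant bounds
  have hb1 : C / (2 * K) = c / (4 * n) := by
    rw [hK_def]; field_simp; ring
  have hb2 : C * K / (2 * ε) ≤ c / (4 * n) := by
    have hd : (0 : ℝ) < 2 * n * C * K / c := by positivity
    have h1 : C * K / (2 * ε) ≤ C * K / (2 * (2 * n * C * K / c)) := by
      apply div_le_div_of_nonneg_left (by positivity) (by positivity)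
      linarith
    refine h1.trans (le_of_eq ?_)
    field_simp
    ring
  clear_value c C K ε
  set δ : ℝ := C / (2 * K) + C * K / (2 * ε) with hδ_def
  have hδn : δ ≤ c / (2 * n) := by
    rw [hδ_def]
    have : c / (4 * n) + c / (4 * n) = c / (2 * n) := by field_simp; ring
    linarith [hb1, hb2]
  have hδ0 : 0 ≤ δ := by
    rw [hδ_def]; positivity
  clear_value δ
  refine ⟨fun i => ε ^ (i : ℕ), fun i => pow_pos hε0 _, fun q => ?_⟩
  set D : Matrix (Fin n) (Fin n) ℂ := Matrix.diagonal (fun i => ((ε ^ (i : ℕ) : ℝ) : ℂ)) with hD_def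
  have hDH : Dᴴ = D := by
    simp [hD_def, Matrix.diagonal_conjTranspose, Pi.star_def]
  clear_value D
  set N : Matrix (Fin n) (Fin n) ℂ := -((U q)ᴴ * D + D * U q) with hN_def
  have hherm : N.IsHermitian := by
    rw [Matrix.IsHermitian, hN_def]
    rw [Matrix.conjTranspose_neg, Matrix.conjTranspose_add, Matrix.conjTranspose_mul,
      Matrix.conjTranspose_mul, Matrix.conjTranspose_conjTranspose, hDH]
    rw [add_comm]
  clear_value N
  refine Matrix.PosDef.of_dotProduct_mulVec_pos hherm (fun x hx => ?_)
  set z : ℂ := star x ⬝ᵥ N *ᵥ x with hz_def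
  clear_value z
  -- z is self-conjugate
  have hzim : z.im = 0 := by
    rw [← Complex.conj_eq_iff_im]
    have : star z = z := by
      rw [hz_def]
      calc star (star x ⬝ᵥ N *ᵥ x) = star (N *ᵥ x) ⬝ᵥ star (star x) := (star_dotProduct_star _ _).symm
        _ = (star x ᵥ* Nᴴ) ⬝ᵥ x := by rw [star_mulVec, star_star]
        _ = star x ⬝ᵥ Nᴴ *ᵥ x := by rw [← Matrix.dotProduct_mulVec]
        _ = star x ⬝ᵥ N *ᵥ x := by rw [hherm.eq]
    exact this
  -- the real part estimate
  set nsq : Fin n → ℝ := fun i => Complex.normSq (x i) with hnsq_def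
  have hnsq0 : ∀ i, 0 ≤ nsq i := fun i => Complex.normSq_nonneg (x i)
  have hnsq_sq : ∀ i, ‖x i‖ ^ 2 = nsq i := fun i => Complex.sq_norm (x i)
  have hnsq_pos : ∀ i, x i ≠ 0 → 0 < nsq i := fun i hi => Complex.normSq_pos.mpr hi
  clear_value nsq
  set S : ℝ := ∑ i : Fin n, ε ^ (i : ℕ) * nsq i with hS_def
  clear_value S
  have hSpos : 0 < S := by
    obtain ⟨i0, hi0⟩ := Function.ne_iff.mp hx
    rw [hS_def]
    refine Finset.sum_pos'
      (fun i _ => mul_nonneg (pow_pos hε0 _).le (hnsq0 i))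
      ⟨i0, Finset.mem_univ _, ?_⟩
    exact mul_pos (pow_pos hε0 _) (hnsq_pos i0 hi0)
  have hz_sum : z.re = ∑ p ∈ Finset.univ ×ˢ Finset.univ,
      (star (x p.1) * (N p.1 p.2 * x p.2)).re := by
    rw [hz_def, dotProduct, Complex.re_sum, Finset.sum_product]
    refine Finset.sum_congr rfl fun i _ => ?_
    rw [Matrix.mulVec, dotProduct, Finset.mul_sum, Complex.re_sum]
    simp
  have hNentry : ∀ i j, N i j =
      -(star (U q j i) * ((ε ^ (j : ℕ) : ℝ) : ℂ) + ((ε ^ (i : ℕ) : ℝ) : ℂ) * U q i j) := by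
    intro i j
    rw [hN_def]
    simp [hD_def, Matrix.neg_apply, Matrix.add_apply, Matrix.mul_diagonal,
      Matrix.diagonal_mul, Matrix.conjTranspose_apply]
  -- generic cross-term bound
  have main : ∀ a b : Fin n, a < b →
      C * ε ^ (a : ℕ) * (‖x a‖ * ‖x b‖) ≤
        δ * (ε ^ (a : ℕ) * nsq a + ε ^ (b : ℕ) * nsq b) := by
    intro a b hab
    have hpow : ε ^ ((a : ℕ) + 1) ≤ ε ^ (b : ℕ) :=
      pow_le_pow_right₀ hε1 (by exact_mod_cast hab)
    have hA := amgm_weighted (a := ‖x a‖) (b := ‖x b‖) hK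
    have hsa : ‖x a‖ ^ 2 = nsq a := hnsq_sq a
    have hsb : ‖x b‖ ^ 2 = nsq b := hnsq_sq b
    have h1 : C * ε ^ (a : ℕ) * (‖x a‖ * ‖x b‖) ≤
        C / (2 * K) * (ε ^ (a : ℕ) * nsq a) + (C * K / 2) * (ε ^ (a : ℕ) * nsq b) := by
      have hCε : 0 ≤ C * ε ^ (a : ℕ) := mul_nonneg hC0.le (pow_pos hε0 _).le
      have := mul_le_mul_of_nonneg_left hA hCε
      rw [← hsa, ← hsb]
      calc C * ε ^ (a : ℕ) * (‖x a‖ * ‖x b‖)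
          ≤ C * ε ^ (a : ℕ) * (‖x a‖ ^ 2 / (2 * K) + K * ‖x b‖ ^ 2 / 2) :=
            this
        _ = C / (2 * K) * (ε ^ (a : ℕ) * ‖x a‖ ^ 2) +
            C * K / 2 * (ε ^ (a : ℕ) * ‖x b‖ ^ 2) := by
            have hKne : K ≠ 0 := ne_of_gt hK
            field_simp
    have h2 : (C * K / 2) * (ε ^ (a : ℕ) * nsq b) ≤ (C * K / (2 * ε)) * (ε ^ (b : ℕ) * nsq b) := by
      have hb0 : 0 ≤ nsq b := hnsq0 b
      have hck : 0 ≤ C * K := mul_nonneg hC0.le hK.le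
      have key : (C * K / 2) * ε ^ (a : ℕ) ≤ (C * K / (2 * ε)) * ε ^ (b : ℕ) := by
        rw [div_mul_eq_mul_div, div_mul_eq_mul_div,
          div_le_div_iff₀ (by norm_num : (0:ℝ) < 2) (by linarith : (0:ℝ) < 2 * ε)]
        have h := mul_le_mul_of_nonneg_left hpow hck
        rw [pow_succ] at h
        have e1 : C * K * ε ^ (a : ℕ) * (2 * ε) = 2 * (C * K * (ε ^ (a : ℕ) * ε)) := by ring
        have e2 : C * K * ε ^ (b : ℕ) * 2 = 2 * (C * K * ε ^ (b : ℕ)) := by ring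
        linarith
      calc (C * K / 2) * (ε ^ (a : ℕ) * nsq b) = ((C * K / 2) * ε ^ (a : ℕ)) * nsq b := by ring
        _ ≤ ((C * K / (2 * ε)) * ε ^ (b : ℕ)) * nsq b := mul_le_mul_of_nonneg_right key hb0
        _ = (C * K / (2 * ε)) * (ε ^ (b : ℕ) * nsq b) := by ring
    have ha0 : 0 ≤ ε ^ (a : ℕ) * nsq a :=
      mul_nonneg (pow_pos hε0 _).le (hnsq0 a)
    have hb0' : 0 ≤ ε ^ (b : ℕ) * nsq b :=
      mul_nonneg (pow_pos hε0 _).le (hnsq0 b)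
    have hc1 : 0 ≤ C / (2 * K) := div_nonneg hC0.le (by linarith)
    have hc2 : 0 ≤ C * K / (2 * ε) := div_nonneg (mul_nonneg hC0.le hK.le) (by linarith)
    rw [hδ_def]
    nlinarith [h1, h2, mul_nonneg hc1 hb0', mul_nonneg hc2 ha0, ha0, hb0']
  -- termwise lower bound
  have key : ∀ p ∈ (Finset.univ ×ˢ Finset.univ : Finset (Fin n × Fin n)),
      (if p.1 = p.2 then 2 * c * (ε ^ (p.1 : ℕ) * nsq p.1) else 0)
        - δ * (ε ^ (p.1 : ℕ) * nsq p.1 + ε ^ (p.2 : ℕ) * nsq p.2)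
      ≤ (star (x p.1) * (N p.1 p.2 * x p.2)).re := by
    rintro ⟨i, j⟩ -
    by_cases hij : i = j
    · subst hij
      simp only [eq_self_iff_true, if_true]
      have h1 : (star (x i) * (N i i * x i)).re = (N i i).re * nsq i := by
        have he : star (x i) * (N i i * x i) = N i i * ((Complex.normSq (x i) : ℝ) : ℂ) := by
          calc star (x i) * (N i i * x i) = N i i * (x i * star (x i)) := by ring
            _ = N i i * ((Complex.normSq (x i) : ℝ) : ℂ) := by
                rw [Complex.star_def, Complex.mul_conj]
        rw [he, Complex.mul_re, Complex.ofReal_re, Complex.ofReal_im]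
        simp [hnsq_def]
      have h2 : 2 * c * ε ^ (i : ℕ) ≤ (N i i).re := by
        rw [hNentry i i]
        simp only [Complex.neg_re, Complex.add_re, Complex.mul_re, Complex.ofReal_re,
          Complex.ofReal_im, Complex.star_def, Complex.conj_re, Complex.conj_im]
        nlinarith [hcle q i, pow_pos hε0 (i : ℕ)]
      have h3 : 0 ≤ nsq i := hnsq0 i
      have h4 : 0 ≤ ε ^ (i : ℕ) := (pow_pos hε0 _).le
      rw [h1]
      nlinarith [mul_le_mul_of_nonneg_right h2 h3, mul_nonneg hδ0 (mul_nonneg h4 h3)]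
    · simp only [if_neg hij, zero_sub]
      have hre_ge : -(‖x i‖ * (‖N i j‖ * ‖x j‖)) ≤
          (star (x i) * (N i j * x j)).re := by
        have h1 : |((star (x i) * (N i j * x j)).re)| ≤ ‖star (x i) * (N i j * x j)‖ :=
          Complex.abs_re_le_norm _
        have h2 : ‖star (x i) * (N i j * x j)‖ =
            ‖x i‖ * (‖N i j‖ * ‖x j‖) := by
          simp [_root_.map_mul]
        rw [h2] at h1
        linarith [(abs_le.mp h1).1]
      rcases lt_or_gt_of_ne hij with h | h
      · -- i < j : U q j i = 0
        have hz1 : U q j i = 0 := htri q j i h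
        have habs : ‖N i j‖ ≤ C * ε ^ (i : ℕ) := by
          rw [hNentry i j, hz1]
          simp only [star_zero, zero_mul, zero_add, norm_neg, norm_mul,
            Complex.norm_real, Real.norm_eq_abs]
          rw [abs_of_pos (pow_pos hε0 _)]
          calc ε ^ (i : ℕ) * ‖U q i j‖ ≤ ε ^ (i : ℕ) * C :=
              mul_le_mul_of_nonneg_left (hCb q i j) (pow_pos hε0 _).le
            _ = C * ε ^ (i : ℕ) := by ring
        have hstep : ‖x i‖ * (‖N i j‖ * ‖x j‖) ≤
            δ * (ε ^ (i : ℕ) * nsq i + ε ^ (j : ℕ) * nsq j) := by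
          calc ‖x i‖ * (‖N i j‖ * ‖x j‖)
              ≤ ‖x i‖ * ((C * ε ^ (i : ℕ)) * ‖x j‖) :=
                mul_le_mul_of_nonneg_left
                  (mul_le_mul_of_nonneg_right habs (norm_nonneg (x j)))
                  (norm_nonneg (x i))
            _ = C * ε ^ (i : ℕ) * (‖x i‖ * ‖x j‖) := by ring
            _ ≤ δ * (ε ^ (i : ℕ) * nsq i + ε ^ (j : ℕ) * nsq j) := main i j h
        linarith [hre_ge]
      · -- j < i : U q i j = 0
        have hz1 : U q i j = 0 := htri q i j h
        have habs : ‖N i j‖ ≤ C * ε ^ (j : ℕ) := by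
          rw [hNentry i j, hz1]
          simp only [mul_zero, add_zero, norm_neg, norm_mul, Complex.norm_real, Real.norm_eq_abs]
          rw [abs_of_pos (pow_pos hε0 _)]
          have habs' : ‖star (U q j i)‖ = ‖U q j i‖ := by
            simp [Complex.star_def]
          rw [habs']
          exact mul_le_mul_of_nonneg_right (hCb q j i) (pow_pos hε0 _).le
        have hstep : ‖x i‖ * (‖N i j‖ * ‖x j‖) ≤
            δ * (ε ^ (i : ℕ) * nsq i + ε ^ (j : ℕ) * nsq j) := by
          have hm := main j i h
          calc ‖x i‖ * (‖N i j‖ * ‖x j‖)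
              ≤ ‖x i‖ * ((C * ε ^ (j : ℕ)) * ‖x j‖) :=
                mul_le_mul_of_nonneg_left
                  (mul_le_mul_of_nonneg_right habs (norm_nonneg (x j)))
                  (norm_nonneg (x i))
            _ = C * ε ^ (j : ℕ) * (‖x j‖ * ‖x i‖) := by ring
            _ ≤ δ * (ε ^ (j : ℕ) * nsq j + ε ^ (i : ℕ) * nsq i) := hm
            _ = δ * (ε ^ (i : ℕ) * nsq i + ε ^ (j : ℕ) * nsq j) := by ring
        linarith [hre_ge]
  -- summing up
  have hsum1 : ∑ p ∈ (Finset.univ ×ˢ Finset.univ : Finset (Fin n × Fin n)),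
      (if p.1 = p.2 then 2 * c * (ε ^ (p.1 : ℕ) * nsq p.1) else 0) = 2 * c * S := by
    rw [Finset.sum_product]
    have : ∀ i : Fin n, (∑ j : Fin n, if i = j then 2 * c * (ε ^ (i : ℕ) * nsq i) else 0)
        = 2 * c * (ε ^ (i : ℕ) * nsq i) := by
      intro i
      rw [Finset.sum_ite_eq]
      simp
    rw [Finset.sum_congr rfl (fun i _ => this i), hS_def, Finset.mul_sum]
  have hsum2 : ∑ p ∈ (Finset.univ ×ˢ Finset.univ : Finset (Fin n × Fin n)),
      (ε ^ (p.1 : ℕ) * nsq p.1 + ε ^ (p.2 : ℕ) * nsq p.2) = 2 * ((n : ℝ) * S) := by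
    have hrow : ∀ i : Fin n, ∑ j : Fin n, (ε ^ (i : ℕ) * nsq i + ε ^ (j : ℕ) * nsq j)
        = (n : ℝ) * (ε ^ (i : ℕ) * nsq i) + S := by
      intro i
      rw [Finset.sum_add_distrib, Finset.sum_const, Finset.card_univ, Fintype.card_fin,
        nsmul_eq_mul, ← hS_def]
    rw [Finset.sum_product, Finset.sum_congr rfl (fun i _ => hrow i),
      Finset.sum_add_distrib, Finset.sum_const, Finset.card_univ, Fintype.card_fin,
      nsmul_eq_mul, ← Finset.mul_sum, ← hS_def]
    ring
  have hlow : 2 * c * S - δ * (2 * ((n : ℝ) * S)) ≤ z.re := by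
    rw [hz_sum]
    calc 2 * c * S - δ * (2 * ((n : ℝ) * S))
        = ∑ p ∈ (Finset.univ ×ˢ Finset.univ : Finset (Fin n × Fin n)),
            ((if p.1 = p.2 then 2 * c * (ε ^ (p.1 : ℕ) * nsq p.1) else 0)
              - δ * (ε ^ (p.1 : ℕ) * nsq p.1 + ε ^ (p.2 : ℕ) * nsq p.2)) := by
          rw [Finset.sum_sub_distrib, hsum1, ← Finset.mul_sum, hsum2]
      _ ≤ _ := Finset.sum_le_sum key
  have hfin : c * S ≤ z.re := by
    have hdel : δ * (2 * ((n : ℝ) * S)) ≤ c * S := by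
      have h1 : δ * (2 * (n : ℝ)) ≤ c := by
        have := mul_le_mul_of_nonneg_right hδn (by linarith : (0:ℝ) ≤ 2 * (n:ℝ))
        calc δ * (2 * (n : ℝ)) ≤ c / (2 * (n : ℝ)) * (2 * (n : ℝ)) := this
          _ = c := by field_simp
      calc δ * (2 * ((n : ℝ) * S)) = (δ * (2 * (n : ℝ))) * S := by ring
        _ ≤ c * S := mul_le_mul_of_nonneg_right h1 hSpos.le
    linarith
  rw [Complex.lt_def]
  constructor
  · simpa using lt_of_lt_of_le (mul_pos hc hSpos) hfin
  · simp [hzim]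


/-- Entrywise coercion of a real matrix to a complex matrix. -/
def mapC {n m : ℕ} (A : Matrix (Fin n) (Fin m) ℝ) : Matrix (Fin n) (Fin m) ℂ :=
  A.map (fun x => (x : ℂ))

/-- A real square matrix is Hurwitz if all of its complex eigenvalues have
negative real part. -/
def IsHurwitz {n : ℕ} (A : Matrix (Fin n) (Fin n) ℝ) : Prop :=
  ∀ μ ∈ spectrum ℂ (mapC A), μ.re < 0

/-- If the Hurwitz matrices `A 1, …, A m` are simultaneously triangularizable by an
invertible complex matrix `T`, then they admit a common quadratic Lyapunov function:
a Hermitian positive definite `P` with `A_qᴴ P + P A_q` negative definite for all `q`. -/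
theorem simultaneous_triangularization_common_lyapunov
    {n m : ℕ} (hn : 1 ≤ n) (hm : 1 ≤ m)
    (A : Fin m → Matrix (Fin n) (Fin n) ℝ)
    (hHurwitz : ∀ q, IsHurwitz (A q))
    (T : Matrix (Fin n) (Fin n) ℂ) (hT : IsUnit T)
    (htri : ∀ q, ∀ i j : Fin n, j < i → (T⁻¹ * mapC (A q) * T) i j = 0) :
    ∃ P : Matrix (Fin n) (Fin n) ℂ, P.PosDef ∧
      ∀ q, (-((mapC (A q))ᴴ * P + P * mapC (A q))).PosDef := by
  classical
  have hdetT : IsUnit T.det := (Matrix.isUnit_iff_isUnit_det T).mp hT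
  have hTT : T * T⁻¹ = 1 := Matrix.mul_nonsing_inv T hdetT
  have hT'T : T⁻¹ * T = 1 := Matrix.nonsing_inv_mul T hdetT
  set U : Fin m → Matrix (Fin n) (Fin n) ℂ := fun q => T⁻¹ * mapC (A q) * T with hU_def
  have hdetinv : T⁻¹.det * T.det = 1 := by
    have := congrArg Matrix.det hT'T
    rwa [Matrix.det_mul, Matrix.det_one] at this
  have hdiag : ∀ q i, (U q i i).re < 0 := by
    intro q i
    apply hHurwitz q
    rw [spectrum.mem_iff]
    intro hunit
    rw [Matrix.isUnit_iff_isUnit_det] at hunit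
    have hconj : T⁻¹ * ((algebraMap ℂ (Matrix (Fin n) (Fin n) ℂ)) (U q i i) - mapC (A q)) * T
        = (algebraMap ℂ (Matrix (Fin n) (Fin n) ℂ)) (U q i i) - U q := by
      rw [Matrix.mul_sub, Matrix.sub_mul, hU_def]
      congr 1
      rw [Algebra.algebraMap_eq_smul_one]
      rw [Matrix.mul_smul, Matrix.mul_one, Matrix.smul_mul, hT'T]
    have hdet1 : ((algebraMap ℂ (Matrix (Fin n) (Fin n) ℂ)) (U q i i) - mapC (A q)).det
        = ((algebraMap ℂ (Matrix (Fin n) (Fin n) ℂ)) (U q i i) - U q).det := by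
      rw [← hconj, Matrix.det_mul, Matrix.det_mul]
      have : T⁻¹.det * ((algebraMap ℂ (Matrix (Fin n) (Fin n) ℂ)) (U q i i) - mapC (A q)).det
          * T.det = ((algebraMap ℂ (Matrix (Fin n) (Fin n) ℂ)) (U q i i) - mapC (A q)).det
          * (T⁻¹.det * T.det) := by ring
      rw [this, hdetinv, mul_one]
    have htriU : ((algebraMap ℂ (Matrix (Fin n) (Fin n) ℂ)) (U q i i) - U q).BlockTriangular id := by
      intro a b hab
      have hab' : b < a := hab
      have hne : a ≠ b := ne_of_gt hab'
      rw [Matrix.sub_apply, algebraMap_matrix_apply, if_neg hne]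
      rw [hU_def]
      simp only [htri q a b hab', sub_zero, zero_sub, neg_eq_zero]
    have hdet0 : ((algebraMap ℂ (Matrix (Fin n) (Fin n) ℂ)) (U q i i) - U q).det = 0 := by
      rw [Matrix.det_of_upperTriangular htriU]
      refine Finset.prod_eq_zero (Finset.mem_univ i) ?_
      rw [Matrix.sub_apply, algebraMap_matrix_apply, if_pos rfl]
      simp
    rw [hdet1, hdet0] at hunit
    simpa using hunit
  obtain ⟨d, hd, hP⟩ := common_lyapunov_triangular hn hm U
    (fun q i j h => by rw [hU_def]; exact htri q i j h) hdiag
  set D : Matrix (Fin n) (Fin n) ℂ := Matrix.diagonal (fun i => ((d i : ℝ) : ℂ)) with hD_def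
  have hDpos : D.PosDef := Matrix.PosDef.diagonal (fun i => by
    rw [Complex.zero_lt_real]
    exact hd i)
  have hTinv : IsUnit T⁻¹ := Matrix.isUnit_nonsing_inv_iff.mpr hT
  refine ⟨(T⁻¹)ᴴ * D * T⁻¹, posDef_congr hDpos hTinv, fun q => ?_⟩
  have hCT : ∀ X : Matrix (Fin n) (Fin n) ℂ, (T⁻¹)ᴴ * (Tᴴ * X) = X := by
    intro X
    rw [← Matrix.mul_assoc, ← Matrix.conjTranspose_mul, hTT, Matrix.conjTranspose_one,
      Matrix.one_mul]
  have e : (T⁻¹)ᴴ * (-((U q)ᴴ * D + D * U q)) * T⁻¹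
      = -((mapC (A q))ᴴ * ((T⁻¹)ᴴ * D * T⁻¹) + ((T⁻¹)ᴴ * D * T⁻¹) * mapC (A q)) := by
    rw [hU_def]
    simp only [Matrix.conjTranspose_mul, Matrix.mul_neg, Matrix.neg_mul, Matrix.mul_add,
      Matrix.add_mul, Matrix.mul_assoc, hTT, Matrix.mul_one, hCT]
  rw [← e]
  exact posDef_congr (hP q) hTinv
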